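/- Let f : ℝ^d → ℝ be differentiable and suppose for all w, w' ∈ ℝ^d, ‖∇f(w')-∇f(w)‖ ≤ ‖w'-w‖·(L₀ + L₁‖∇f(w)‖)·exp(L₁‖w'-w‖) for some constants L₀, L₁ > 0. Then for all w, w', f(w') ≤ f(w) + ⟨∇f(w), w'-w⟩ + (1/2)‖w'-w‖²·(L₀ + L₁‖∇f(w)‖)·exp(L₁‖w'-w‖). -/

import Mathlib

open RealInnerProductSpace

theorem descent_lemma_exp {d : ℕ}
    (f : EuclideanSpace ℝ (Fin d) → ℝ) (hf : Differentiable ℝ f)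
    (L₀ L₁ : ℝ) (hL₀ : 0 < L₀) (hL₁ : 0 < L₁)
    (hsmooth : ∀ w w' : EuclideanSpace ℝ (Fin d),
      ‖gradient f w' - gradient f w‖ ≤
        ‖w' - w‖ * (L₀ + L₁ * ‖gradient f w‖) * Real.exp (L₁ * ‖w' - w‖)) :
    ∀ w w' : EuclideanSpace ℝ (Fin d),
      f w' ≤ f w + ⟪gradient f w, w' - w⟫ +
        (1/2) * ‖w' - w‖ ^ 2 * (L₀ + L₁ * ‖gradient f w‖) * Real.exp (L₁ * ‖w' - w‖) := by
  intro w w'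
  set v : EuclideanSpace ℝ (Fin d) := w' - w with hv
  set C : ℝ := L₀ + L₁ * ‖gradient f w‖ with hC
  have hCpos : 0 < C := by
    have : 0 ≤ L₁ * ‖gradient f w‖ := mul_nonneg hL₁.le (norm_nonneg _)
    linarith
  -- gradient is continuous
  have hgradcont : Continuous (gradient f) := by
    rw [continuous_iff_continuousAt]
    intro x
    rw [ContinuousAt, tendsto_iff_norm_sub_tendsto_zero]
    have hb : Continuous (fun y : EuclideanSpace ℝ (Fin d) =>
        ‖y - x‖ * (L₀ + L₁ * ‖gradient f x‖) * Real.exp (L₁ * ‖y - x‖)) := by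
      fun_prop
    have hb0 : Filter.Tendsto (fun y : EuclideanSpace ℝ (Fin d) =>
        ‖y - x‖ * (L₀ + L₁ * ‖gradient f x‖) * Real.exp (L₁ * ‖y - x‖)) (nhds x) (nhds 0) := by
      have := hb.continuousAt (x := x)
      simpa [ContinuousAt] using this
    exact squeeze_zero (fun y => norm_nonneg _) (fun y => hsmooth x y) hb0
  -- the path
  set γ : ℝ → EuclideanSpace ℝ (Fin d) := fun t => w + t • v with hγ
  have hγ0 : γ 0 = w := by simp [hγ]
  have hγ1 : γ 1 = w' := by simp [hγ, hv]
  have hderiv : ∀ t : ℝ, HasDerivAt (fun s => f (γ s)) (⟪gradient f (γ t), v⟫) t := by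
    intro t
    have h1 : HasDerivAt γ v t := by
      have : HasDerivAt (fun s : ℝ => s • v) ((1 : ℝ) • v) t := (hasDerivAt_id t).smul_const v
      simpa [hγ, one_smul] using (this.const_add w)
    have h2 : HasFDerivAt f (fderiv ℝ f (γ t)) (γ t) := (hf (γ t)).hasFDerivAt
    have h3 := h2.comp_hasDerivAt t h1
    have h4 : fderiv ℝ f (γ t) v = ⟪gradient f (γ t), v⟫ := by
      rw [gradient]
      rw [InnerProductSpace.toDual_symm_apply]
    rw [← h4]; exact h3
  have hcontint : Continuous (fun t : ℝ => ⟪gradient f (γ t), v⟫) := by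
    have : Continuous γ := by fun_prop
    exact (hgradcont.comp this).inner continuous_const
  have hFTC : ∫ t in (0:ℝ)..1, ⟪gradient f (γ t), v⟫ = f w' - f w := by
    rw [intervalIntegral.integral_eq_sub_of_hasDerivAt (fun t _ => hderiv t)
      (hcontint.intervalIntegrable 0 1)]
    rw [hγ0, hγ1]
  -- bound the integrand difference
  have hbound : ∀ t ∈ Set.Icc (0:ℝ) 1,
      ⟪gradient f (γ t) - gradient f w, v⟫ ≤ t * (‖v‖ ^ 2 * C * Real.exp (L₁ * ‖v‖)) := by
    intro t ht
    obtain ⟨ht0, ht1⟩ := ht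
    have hnorm : ‖γ t - w‖ = t * ‖v‖ := by
      simp [hγ, norm_smul, abs_of_nonneg ht0]
    calc ⟪gradient f (γ t) - gradient f w, v⟫
        ≤ ‖gradient f (γ t) - gradient f w‖ * ‖v‖ := real_inner_le_norm _ _
      _ ≤ (‖γ t - w‖ * C * Real.exp (L₁ * ‖γ t - w‖)) * ‖v‖ := by
          apply mul_le_mul_of_nonneg_right (hsmooth w (γ t)) (norm_nonneg _)
      _ ≤ (t * ‖v‖ * C * Real.exp (L₁ * ‖v‖)) * ‖v‖ := by
          rw [hnorm]
          apply mul_le_mul_of_nonneg_right _ (norm_nonneg _)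
          apply mul_le_mul_of_nonneg_left _ (by positivity)
          apply Real.exp_le_exp.mpr
          apply mul_le_mul_of_nonneg_left _ hL₁.le
          nlinarith [norm_nonneg v]
      _ = t * (‖v‖ ^ 2 * C * Real.exp (L₁ * ‖v‖)) := by ring
  have hint1 : IntervalIntegrable (fun t => ⟪gradient f (γ t) - gradient f w, v⟫)
      MeasureTheory.volume 0 1 := by
    have : Continuous (fun t : ℝ => ⟪gradient f (γ t) - gradient f w, v⟫) := by
      have : Continuous γ := by fun_prop
      exact ((hgradcont.comp this).sub continuous_const).inner continuous_const
    exact this.intervalIntegrable 0 1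
  have hint2 : IntervalIntegrable (fun t => t * (‖v‖ ^ 2 * C * Real.exp (L₁ * ‖v‖)))
      MeasureTheory.volume 0 1 := by
    apply Continuous.intervalIntegrable; fun_prop
  have hmono : ∫ t in (0:ℝ)..1, ⟪gradient f (γ t) - gradient f w, v⟫ ≤
      ∫ t in (0:ℝ)..1, t * (‖v‖ ^ 2 * C * Real.exp (L₁ * ‖v‖)) := by
    apply intervalIntegral.integral_mono_on (by norm_num) hint1 hint2
    intro t ht
    exact hbound t ht
  have hrhs : ∫ t in (0:ℝ)..1, t * (‖v‖ ^ 2 * C * Real.exp (L₁ * ‖v‖)) =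
      (1/2) * (‖v‖ ^ 2 * C * Real.exp (L₁ * ‖v‖)) := by
    rw [intervalIntegral.integral_mul_const, integral_id]
    norm_num
  have hlhs : ∫ t in (0:ℝ)..1, ⟪gradient f (γ t) - gradient f w, v⟫ =
      (f w' - f w) - ⟪gradient f w, v⟫ := by
    have : (fun t : ℝ => ⟪gradient f (γ t) - gradient f w, v⟫) =
        (fun t : ℝ => ⟪gradient f (γ t), v⟫ - ⟪gradient f w, v⟫) := by
      funext t; rw [inner_sub_left]
    rw [this, intervalIntegral.integral_sub (hcontint.intervalIntegrable 0 1)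
      (intervalIntegrable_const), hFTC, intervalIntegral.integral_const]
    simp
  rw [hlhs, hrhs] at hmono
  linarith
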